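/- Let p, q ≥ 2 with n = p + q + 1. Then the complement Ω := S^n ∖ (S^p ∪ S^q) of the two complementary great subspheres is a simply connected topological space. -/

import Mathlib

noncomputable section

open Set

/-- The great `p`-sphere `S^p = {v ∈ S^n : y(v) = 0}`, where `y(v)` is the
`ℝ^{q+1}`-component (coordinates of 0-based index `≥ p+1`). -/
def greatSphereP (n p : ℕ) : Set (EuclideanSpace ℝ (Fin (n + 1))) :=
  {v | ‖v‖ = 1 ∧ ∀ k : Fin (n + 1), p + 1 ≤ (k : ℕ) → v k = 0}

/-- The great `q`-sphere `S^q = {v ∈ S^n : x(v) = 0}`, where `x(v)` is the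
`ℝ^{p+1}`-component (coordinates of 0-based index `< p+1`). -/
def greatSphereQ (n p : ℕ) : Set (EuclideanSpace ℝ (Fin (n + 1))) :=
  {v | ‖v‖ = 1 ∧ ∀ k : Fin (n + 1), (k : ℕ) < p + 1 → v k = 0}

/-- `Ω := S^n ∖ (S^p ∪ S^q)` with its subspace topology. -/
def Omega (n p : ℕ) : Set (EuclideanSpace ℝ (Fin (n + 1))) :=
  {v | ‖v‖ = 1} \ (greatSphereP n p ∪ greatSphereQ n p)

open unitInterval CategoryTheory
open scoped ContinuousMap

attribute [local instance] Path.Homotopic.setoid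

universe u




theorem simplyConnected_of_homotopyEquiv {X Y : Type u} [TopologicalSpace X] [TopologicalSpace Y]
    [SimplyConnectedSpace X] (h : ContinuousMap.HomotopyEquiv X Y) : SimplyConnectedSpace Y := by
  obtain ⟨e⟩ := (inferInstance : SimplyConnectedSpace X).equiv_unit
  exact ⟨⟨((FundamentalGroupoidFunctor.equivOfHomotopyEquiv
    (show TopCat.of X ≃ₕ TopCat.of Y from h)).symm.trans e)⟩⟩

theorem simplyConnected_of_homeomorph {X Y : Type u} [TopologicalSpace X] [TopologicalSpace Y]
    [SimplyConnectedSpace X] (h : X ≃ₜ Y) : SimplyConnectedSpace Y :=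
  simplyConnected_of_homotopyEquiv h.toHomotopyEquiv

instance simplyConnected_prod {X Y : Type u} [TopologicalSpace X] [TopologicalSpace Y]
    [SimplyConnectedSpace X] [SimplyConnectedSpace Y] : SimplyConnectedSpace (X × Y) := by
  rw [simply_connected_iff_paths_homotopic]
  have : PathConnectedSpace (X × Y) :=
    ⟨inferInstance, fun a b => ⟨(PathConnectedSpace.somePath a.1 b.1).prod
      (PathConnectedSpace.somePath a.2 b.2)⟩⟩
  refine ⟨this, fun a b => ⟨fun P Q => ?_⟩⟩
  have h1 : Path.Homotopic.projLeft P = Path.Homotopic.projLeft Q := Subsingleton.elim _ _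
  have h2 : Path.Homotopic.projRight P = Path.Homotopic.projRight Q := Subsingleton.elim _ _
  rw [← Path.Homotopic.prod_projLeft_projRight P, ← Path.Homotopic.prod_projLeft_projRight Q,
    h1, h2]

/-- A loop contained in a simply connected subset is null-homotopic. -/
theorem nullhomotopic_of_mem_simplyConnected {X : Type u} [TopologicalSpace X] {S : Set X}
    [SimplyConnectedSpace S] {a : X} (ha : a ∈ S) (ℓ : Path a a) (hr : ∀ t, ℓ t ∈ S) :
    Path.Homotopic ℓ (Path.refl a) := by
  let ℓ' : Path (⟨a, ha⟩ : S) ⟨a, ha⟩ :=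
    { toFun := fun t => ⟨ℓ t, hr t⟩
      continuous_toFun := ℓ.continuous.subtype_mk _
      source' := Subtype.ext ℓ.source
      target' := Subtype.ext ℓ.target }
  have h : Path.Homotopic ℓ' (Path.refl (⟨a, ha⟩ : S)) :=
    SimplyConnectedSpace.paths_homotopic ℓ' (Path.refl _)
  have h2 : Path.Homotopic (ℓ'.map continuous_subtype_val)
      ((Path.refl (⟨a, ha⟩ : S)).map continuous_subtype_val) :=
    Path.Homotopic.map h ⟨_, continuous_subtype_val⟩
  have e1 : ℓ'.map continuous_subtype_val = ℓ := by ext t; rfl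
  have e2 : (Path.refl (⟨a, ha⟩ : S)).map continuous_subtype_val = Path.refl a := by ext t; rfl
  rwa [e1, e2] at h2


variable {X : Type u} [TopologicalSpace X]

theorem path_cast_homotopic {x y x' y' : X} {p q : Path x y} (h : Path.Homotopic p q)
    (hx : x' = x) (hy : y' = y) : Path.Homotopic (p.cast hx hy) (q.cast hx hy) := by
  subst hx; subst hy
  have hp : p.cast rfl rfl = p := by ext t; rfl
  have hq : q.cast rfl rfl = q := by ext t; rfl
  rwa [hp, hq]

theorem homotopic_of_trans_symm {x y : X} {p q : Path x y}
    (h : Path.Homotopic (p.trans q.symm) (Path.refl x)) : Path.Homotopic p q := by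
  let P : FundamentalGroupoid.mk x ⟶ FundamentalGroupoid.mk y := ⟦p⟧
  let Q : FundamentalGroupoid.mk x ⟶ FundamentalGroupoid.mk y := ⟦q⟧
  have hh : P ≫ Groupoid.inv Q = 𝟙 (FundamentalGroupoid.mk x) := by
    show (⟦p.trans q.symm⟧ : Path.Homotopic.Quotient x x) = ⟦Path.refl x⟧
    exact Quotient.sound h
  have hPQ : P = Q := by
    calc P = P ≫ (Groupoid.inv Q ≫ Q) := by rw [Groupoid.inv_comp, Category.comp_id]
      _ = (P ≫ Groupoid.inv Q) ≫ Q := by rw [Category.assoc]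
      _ = Q := by rw [hh, Category.id_comp]
  exact Quotient.exact hPQ

theorem homotopic_of_trans_left {x y z : X} {α : Path x y} {p q : Path y z}
    (h : Path.Homotopic (α.trans p) (α.trans q)) : Path.Homotopic p q := by
  let A : FundamentalGroupoid.mk x ⟶ FundamentalGroupoid.mk y := ⟦α⟧
  let P : FundamentalGroupoid.mk y ⟶ FundamentalGroupoid.mk z := ⟦p⟧
  let Q : FundamentalGroupoid.mk y ⟶ FundamentalGroupoid.mk z := ⟦q⟧
  have hh : A ≫ P = A ≫ Q := by
    show (⟦α.trans p⟧ : Path.Homotopic.Quotient x z) = ⟦α.trans q⟧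
    exact Quotient.sound h
  have hPQ : P = Q := by
    calc P = (Groupoid.inv A ≫ A) ≫ P := by rw [Groupoid.inv_comp, Category.id_comp]
      _ = Groupoid.inv A ≫ (A ≫ P) := by rw [Category.assoc]
      _ = Groupoid.inv A ≫ (A ≫ Q) := by rw [hh]
      _ = (Groupoid.inv A ≫ A) ≫ Q := by rw [Category.assoc]
      _ = Q := by rw [Groupoid.inv_comp, Category.id_comp]
  exact Quotient.exact hPQ

theorem path_trans_mem {x y z : X} {S : Set X} {p : Path x y} {q : Path y z}
    (hp : ∀ s, p s ∈ S) (hq : ∀ s, q s ∈ S) : ∀ s, (p.trans q) s ∈ S := by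
  intro s
  have : (p.trans q) s ∈ range (p.trans q) := mem_range_self s
  rw [Path.trans_range] at this
  rcases this with ⟨u, hu⟩ | ⟨u, hu⟩
  · exact hu ▸ hp u
  · exact hu ▸ hq u

theorem homotopic_truncate_trans {x y : X} (γ : Path x y)
    {b c : ℝ} (h0b : 0 ≤ b) (hbc : b ≤ c) (hc1 : c ≤ 1) :
    Path.Homotopic ((γ.truncateOfLE h0b).trans (γ.truncateOfLE hbc))
      (γ.truncateOfLE (h0b.trans hbc)) := by
  have hb1 : b ≤ 1 := hbc.trans hc1
  let f : I → I := fun s =>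
    ⟨max (min (2 * (s : ℝ)) b) (2 * (s : ℝ) - 1), by
      constructor
      · exact le_max_of_le_left (le_min (by have := s.2.1; linarith) h0b)
      · exact max_le (min_le_right _ _ |>.trans hb1) (by have := s.2.2; linarith)⟩
  have hfc : Continuous f := by
    apply Continuous.subtype_mk
    exact ((continuous_const.mul continuous_subtype_val).min continuous_const).max
      ((continuous_const.mul continuous_subtype_val).sub continuous_const)
  have hf0 : f 0 = 0 := by
    apply Subtype.ext
    show max (min (2 * (0 : ℝ)) b) (2 * (0 : ℝ) - 1) = 0
    rw [mul_zero, min_eq_left h0b]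
    simp
  have hf1 : f 1 = 1 := by
    apply Subtype.ext
    show max (min (2 * (1 : ℝ)) b) (2 * (1 : ℝ) - 1) = 1
    rw [mul_one]
    rw [min_eq_right (by linarith)]
    norm_num [max_eq_right hb1]
  have heq : (γ.truncateOfLE (h0b.trans hbc)).reparam f hfc hf0 hf1 =
      (γ.truncateOfLE h0b).trans (γ.truncateOfLE hbc) := by
    ext s
    rw [Path.trans_apply]
    split_ifs with h
    · show γ.extend (min (max (↑(f s)) 0) c) = γ.extend (min (max (2 * (s:ℝ)) 0) b)
      congr 1
      show min (max (max (min (2*(s:ℝ)) b) (2*(s:ℝ)-1)) 0) c = min (max (2*(s:ℝ)) 0) b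
      have hs0 : (0:ℝ) ≤ (s:ℝ) := s.2.1
      have h1 : (2*(s:ℝ)-1) ≤ min (2*(s:ℝ)) b := le_min (by linarith) (by linarith)
      have hs0' : (0:ℝ) ≤ 2 * (s:ℝ) := by linarith
      rw [max_eq_left h1, max_eq_left (le_min hs0' h0b),
        min_eq_left ((min_le_right _ _).trans hbc), max_eq_left hs0']
    · show γ.extend (min (max (↑(f s)) 0) c) = γ.extend (min (max (2 * (s:ℝ) - 1) b) c)
      congr 1
      show min (max (max (min (2*(s:ℝ)) b) (2*(s:ℝ)-1)) 0) c = min (max (2*(s:ℝ)-1) b) c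
      push_neg at h
      have hs1 : (s:ℝ) ≤ 1 := s.2.2
      have e1 : min (2*(s:ℝ)) b = b := min_eq_right (by linarith)
      rw [e1, max_comm b (2*(s:ℝ)-1), max_eq_left (le_max_of_le_right h0b)]
  have hh : Path.Homotopic (γ.truncateOfLE (h0b.trans hbc))
      ((γ.truncateOfLE (h0b.trans hbc)).reparam f hfc hf0 hf1) :=
    ⟨Path.Homotopy.reparam _ f hfc hf0 hf1⟩
  rw [heq] at hh
  exact hh.symm


variable {X : Type u} [TopologicalSpace X]

-- placeholders for already-proved lemmas (will be concatenated)

theorem vanKampen_simplyConnected {U V : Set X}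
    (hUo : IsOpen U) (hVo : IsOpen V) (hUVuniv : U ∪ V = univ)
    [SimplyConnectedSpace U] [SimplyConnectedSpace V]
    (hpc : IsPathConnected (U ∩ V)) : SimplyConnectedSpace X := by
  obtain ⟨x₀, hx₀, -⟩ := id hpc
  have hUpc : IsPathConnected U := by
    rw [isPathConnected_iff_pathConnectedSpace]; infer_instance
  have hVpc : IsPathConnected V := by
    rw [isPathConnected_iff_pathConnectedSpace]; infer_instance
  have hXpc : PathConnectedSpace X := by
    rw [pathConnectedSpace_iff_univ, ← hUVuniv]
    exact hUpc.union hVpc ⟨x₀, hx₀⟩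
  -- Key step: every loop based at x₀ is null-homotopic
  have key : ∀ γ : Path x₀ x₀, Path.Homotopic γ (Path.refl x₀) := by
    intro γ
    -- open cover of I
    let c : Bool → Set I := fun i => if i then (⇑γ ⁻¹' U) else (⇑γ ⁻¹' V)
    have hco : ∀ i, IsOpen (c i) := by
      intro i
      cases i
      · exact hVo.preimage γ.continuous
      · exact hUo.preimage γ.continuous
    have hcc : (univ : Set I) ⊆ ⋃ i, c i := by
      intro s _
      have hm : γ s ∈ U ∪ V := by rw [hUVuniv]; trivial
      rcases hm with hm | hm
      · exact mem_iUnion.2 ⟨true, hm⟩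
      · exact mem_iUnion.2 ⟨false, hm⟩
    obtain ⟨t, ht0, htm, ⟨N, htN⟩, hsub⟩ :=
      exists_monotone_Icc_subset_open_cover_unitInterval hco hcc
    -- choose a set U or V for each subinterval
    have hA : ∀ m : ℕ, ∃ S : Set X, (S = U ∨ S = V) ∧
        ∀ s ∈ Icc (t m) (t (m + 1)), γ s ∈ S := by
      intro m
      obtain ⟨i, hi⟩ := hsub m
      cases i
      · exact ⟨V, Or.inr rfl, fun s hs => hi hs⟩
      · exact ⟨U, Or.inl rfl, fun s hs => hi hs⟩
    choose A hAUV hAmem using hA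
    have hx₀A : ∀ m, x₀ ∈ A m := by
      intro m; rcases hAUV m with h | h <;> rw [h]
      exacts [hx₀.1, hx₀.2]
    have hUVA : ∀ m, U ∩ V ⊆ A m := by
      intro m; rcases hAUV m with h | h <;> rw [h]
      exacts [inter_subset_left, inter_subset_right]
    have hApc : ∀ m, IsPathConnected (A m) := by
      intro m; rcases hAUV m with h | h <;> rw [h]
      exacts [hUpc, hVpc]
    have hAsc : ∀ m (a : X), a ∈ A m → ∀ ℓ : Path a a, (∀ s, ℓ s ∈ A m) →
        Path.Homotopic ℓ (Path.refl a) := by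
      intro m a ha ℓ hℓ
      rcases hAUV m with h | h <;> rw [h] at ha hℓ
      · exact nullhomotopic_of_mem_simplyConnected ha ℓ hℓ
      · exact nullhomotopic_of_mem_simplyConnected ha ℓ hℓ
    -- connecting paths
    have hβ : ∀ m, ∃ β : Path x₀ (γ (t (m + 1))),
        (∀ s, β s ∈ A m) ∧ ∀ s, β s ∈ A (m + 1) := by
      intro m
      have hmem : γ (t (m + 1)) ∈ A m :=
        hAmem m _ ⟨htm (Nat.le_succ m), le_refl _⟩
      have hmem' : γ (t (m + 1)) ∈ A (m + 1) :=
        hAmem (m + 1) _ ⟨le_refl _, htm (Nat.le_succ (m + 1))⟩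
      by_cases hsame : A m = A (m + 1)
      · obtain ⟨β, hβm⟩ := (hApc m).joinedIn x₀ (hx₀A m) _ hmem
        exact ⟨β, hβm, fun s => hsame ▸ hβm s⟩
      · have hUVmem : γ (t (m + 1)) ∈ U ∩ V := by
          rcases hAUV m with h1 | h1 <;> rcases hAUV (m + 1) with h2 | h2
          · exact absurd (h1.trans h2.symm) hsame
          · exact ⟨h1 ▸ hmem, h2 ▸ hmem'⟩
          · exact ⟨h2 ▸ hmem', h1 ▸ hmem⟩
          · exact absurd (h1.trans h2.symm) hsame
        obtain ⟨β, hβm⟩ := hpc.joinedIn x₀ hx₀ _ hUVmem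
        exact ⟨β, fun s => hUVA m (hβm s), fun s => hUVA (m + 1) (hβm s)⟩
    choose β hβ1 hβ2 using hβ
    -- the combined family, indexed so that B m : Path x₀ (γ (t m))
    have hB0 : γ (t 0) = x₀ := by rw [ht0]; exact γ.source
    let B : ∀ m : ℕ, Path x₀ (γ (t m)) := fun m =>
      Nat.casesOn m ((Path.refl x₀).cast rfl hB0) fun k => β k
    have hBmem : ∀ m s, B m s ∈ A m := by
      intro m s
      cases m with
      | zero => exact hx₀A 0
      | succ k => exact hβ2 k s
    have hBmem' : ∀ m s, B (m + 1) s ∈ A m := fun m s => hβ1 m s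
    -- the casts into `extend` form
    have e0 : γ.extend 0 = x₀ := γ.extend_zero
    have em : ∀ m : ℕ, γ.extend (t m) = γ (t m) := fun m => γ.extend_extends' (t m)
    let B' : ∀ m : ℕ, Path (γ.extend 0) (γ.extend (t m)) := fun m => (B m).cast e0 (em m)
    have hB'mem : ∀ m s, B' m s ∈ A m := fun m s => hBmem m s
    have hB'mem' : ∀ m s, B' (m + 1) s ∈ A m := fun m s => hBmem' m s
    -- truncations of γ
    have h0t : ∀ m : ℕ, (0 : ℝ) ≤ (t m : ℝ) := fun m => (t m).2.1
    have ht1 : ∀ m : ℕ, ((t m : ℝ)) ≤ 1 := fun m => (t m).2.2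
    have htle : ∀ m : ℕ, ((t m : ℝ)) ≤ (t (m + 1) : ℝ) := fun m => htm (Nat.le_succ m)
    -- middle pieces lie in A m
    have hmid : ∀ m (s : I), (γ.truncateOfLE (htle m)) s ∈ A m := by
      intro m s
      show γ.extend (min (max (s : ℝ) (t m : ℝ)) (t (m + 1) : ℝ)) ∈ A m
      set r : ℝ := min (max (s : ℝ) (t m : ℝ)) (t (m + 1) : ℝ) with hr
      have hr01 : r ∈ Icc (0 : ℝ) 1 := by
        constructor
        · exact le_min ((h0t m).trans (le_max_right _ _)) (h0t (m + 1))
        · exact (min_le_right _ _).trans (ht1 (m + 1))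
      rw [γ.extend_apply hr01]
      refine hAmem m ⟨r, hr01⟩ ⟨?_, ?_⟩
      · show (t m : ℝ) ≤ r
        exact le_min (le_max_right _ _) (htle m)
      · show r ≤ (t (m + 1) : ℝ)
        exact min_le_right _ _
    -- main induction
    have claim : ∀ m : ℕ, Path.Homotopic (γ.truncateOfLE (h0t m)) (B' m) := by
      intro m
      induction m with
      | zero =>
        have : γ.truncateOfLE (h0t 0) = B' 0 := by
          ext s
          show γ.extend (min (max (s : ℝ) 0) (t 0 : ℝ)) = x₀
          have h00 : ((t 0 : I) : ℝ) = 0 := by rw [ht0]; rfl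
          rw [h00, min_eq_right (le_max_right _ _), γ.extend_zero]
        rw [this]
      | succ m ih =>
        have step1 := homotopic_truncate_trans γ (h0t m) (htle m) (ht1 (m + 1))
        have step2 : Path.Homotopic ((γ.truncateOfLE (h0t m)).trans (γ.truncateOfLE (htle m)))
            ((B' m).trans (γ.truncateOfLE (htle m))) :=
          Path.Homotopic.hcomp ih (Path.Homotopic.refl _)
        have step3 : Path.Homotopic ((B' m).trans (γ.truncateOfLE (htle m))) (B' (m + 1)) := by
          apply homotopic_of_trans_symm
          apply hAsc m (γ.extend 0) (by rw [e0]; exact hx₀A m)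
          apply path_trans_mem
          · exact path_trans_mem (hB'mem m) (hmid m)
          · intro s
            show (B' (m + 1)).symm s ∈ A m
            have : (B' (m + 1)).symm s = (B' (m + 1)) (σ s) := rfl
            rw [this]
            exact hB'mem' m (σ s)
        have h01 : h0t (m + 1) = (h0t m).trans (htle m) := rfl
        rw [h01]
        exact (step1.symm.trans step2).trans step3
    -- conclude
    have hfin := claim (N + 1)
    have htN1 : ((t (N + 1) : I) : ℝ) = 1 := by rw [htN (N + 1) (Nat.le_succ N)]; rfl
    have eT : γ.extend ((t (N + 1) : I) : ℝ) = x₀ := by rw [htN1, γ.extend_one]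
    have hγeq : γ.truncateOfLE (h0t (N + 1)) = γ.cast e0 eT := by
      ext s
      show γ.extend (min (max (s : ℝ) 0) ((t (N + 1) : I) : ℝ)) = γ s
      rw [htN1, max_eq_left s.2.1, min_eq_left s.2.2, γ.extend_extends' s]
    rw [hγeq] at hfin
    have hfin2 := path_cast_homotopic hfin e0.symm eT.symm
    have hγc : (γ.cast e0 eT).cast e0.symm eT.symm = γ := by ext s; rfl
    rw [hγc] at hfin2
    have hL : Path.Homotopic ((B' (N + 1)).cast e0.symm eT.symm) (Path.refl x₀) := by
      apply hAsc N x₀ (hx₀A N)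
      intro s
      show B (N + 1) s ∈ A N
      exact hBmem' N s
    exact hfin2.trans hL
  -- from loops at x₀ to the general statement
  rw [simply_connected_iff_paths_homotopic]
  refine ⟨hXpc, fun x y => ⟨fun P Q => ?_⟩⟩
  refine Quotient.inductionOn₂ P Q fun p q => Quotient.sound ?_
  let α : Path x₀ x := (hXpc.joined x₀ x).somePath
  have hloop : Path.Homotopic ((α.trans p).trans (α.trans q).symm) (Path.refl x₀) :=
    key _
  exact homotopic_of_trans_left (homotopic_of_trans_symm hloop)
section SphereSC

open Metric Module

variable {E : Type} [NormedAddCommGroup E] [InnerProductSpace ℝ E] [FiniteDimensional ℝ E]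

/-- The complement of a point in the unit sphere is homeomorphic to a hyperplane. -/
def homeoComplSphere (c : sphere (0:E) 1) :
    ↥({c}ᶜ : Set (sphere (0:E) 1)) ≃ₜ ((ℝ ∙ (c:E))ᗮ : Submodule ℝ E) :=
  have hc : ‖(c:E)‖ = 1 := norm_eq_of_mem_sphere c
  (Homeomorph.setCongr (by rw [stereographic_source hc])).trans <|
    (stereographic hc).toHomeomorphSourceTarget.trans <|
      (Homeomorph.setCongr (stereographic_target hc)).trans (Homeomorph.Set.univ _)

theorem simplyConnected_compl_point (c : sphere (0:E) 1) :
    SimplyConnectedSpace ↥({c}ᶜ : Set (sphere (0:E) 1)) :=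
  simplyConnected_of_homeomorph (homeoComplSphere c).symm

theorem one_lt_rank_hyperplane (h3 : 3 ≤ finrank ℝ E) (c : sphere (0:E) 1) :
    1 < Module.rank ℝ ((ℝ ∙ (c:E))ᗮ : Submodule ℝ E) := by
  have hc0 : (c:E) ≠ 0 := ne_zero_of_mem_unit_sphere c
  have h1 : finrank ℝ (ℝ ∙ (c:E)) = 1 := finrank_span_singleton hc0
  have h2 : finrank ℝ (ℝ ∙ (c:E)) + finrank ℝ ((ℝ ∙ (c:E))ᗮ : Submodule ℝ E) = finrank ℝ E :=
    Submodule.finrank_add_finrank_orthogonal _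
  have h4 : 2 ≤ finrank ℝ ((ℝ ∙ (c:E))ᗮ : Submodule ℝ E) := by omega
  rw [← finrank_eq_rank]
  exact_mod_cast (by omega : 1 < finrank ℝ ((ℝ ∙ (c:E))ᗮ : Submodule ℝ E))

theorem sphere_simplyConnected (h3 : 3 ≤ finrank ℝ E) :
    SimplyConnectedSpace ↥(sphere (0:E) 1) := by
  have : Nontrivial E := Module.nontrivial_of_finrank_pos (R := ℝ) (by omega)
  obtain ⟨v, hv⟩ := NormedSpace.sphere_nonempty (x := (0:E)) (r := 1).mpr zero_le_one
  let N : sphere (0:E) 1 := ⟨v, hv⟩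
  have hNne : N ≠ -N := ne_neg_of_mem_unit_sphere ℝ N
  haveI hsU : SimplyConnectedSpace ↥({N}ᶜ : Set (sphere (0:E) 1)) := simplyConnected_compl_point N
  haveI hsV : SimplyConnectedSpace ↥({-N}ᶜ : Set (sphere (0:E) 1)) :=
    simplyConnected_compl_point (-N)
  apply vanKampen_simplyConnected (U := ({N}ᶜ : Set (sphere (0:E) 1)))
    (V := ({-N}ᶜ : Set (sphere (0:E) 1))) isOpen_compl_singleton isOpen_compl_singleton
  · ext x
    simp only [Set.mem_union, Set.mem_compl_iff, Set.mem_singleton_iff, Set.mem_univ, iff_true]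
    by_contra hcon
    push_neg at hcon
    exact hNne (hcon.1.symm.trans hcon.2)
  · -- path connectedness of the intersection
    let he := homeoComplSphere N
    have hmem : -N ∈ ({N}ᶜ : Set (sphere (0:E) 1)) := fun h => hNne (Set.mem_singleton_iff.mp h).symm
    let w₀ := he ⟨-N, hmem⟩
    have hW : IsPathConnected ({w₀}ᶜ : Set ((ℝ ∙ (N:E))ᗮ : Submodule ℝ E)) :=
      isPathConnected_compl_singleton_of_one_lt_rank (one_lt_rank_hyperplane h3 N) w₀
    let g : ((ℝ ∙ (N:E))ᗮ : Submodule ℝ E) → sphere (0:E) 1 := fun w => ↑(he.symm w)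
    have hg : Continuous g := continuous_subtype_val.comp he.symm.continuous
    have himg := hW.image hg
    have hclaim : g '' ({w₀}ᶜ) = ({N}ᶜ : Set (sphere (0:E) 1)) ∩ ({-N}ᶜ) := by
      ext x
      constructor
      · rintro ⟨w, hw, rfl⟩
        refine ⟨(he.symm w).2, ?_⟩
        intro hx
        apply hw
        have : he.symm w = ⟨-N, hmem⟩ := Subtype.ext (Set.mem_singleton_iff.mp hx)
        show w = w₀
        rw [← he.apply_symm_apply w, this]
      · rintro ⟨hxU, hxV⟩
        refine ⟨he ⟨x, hxU⟩, ?_, ?_⟩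
        · intro hcon
          have := he.injective (Set.mem_singleton_iff.mp hcon)
          exact hxV (by rw [Set.mem_singleton_iff]; exact congrArg Subtype.val this)
        · show ↑(he.symm (he ⟨x, hxU⟩)) = x
          rw [he.symm_apply_apply]
      
    rwa [hclaim] at himg

end SphereSC


section Restrict

open Metric

variable {N M : ℕ}

theorem sum_sq_restrict (e : Fin M ↪ Fin N) (v : EuclideanSpace ℝ (Fin N))
    (hv : ∀ k, (∀ i, e i ≠ k) → v k = 0) :
    ∑ i : Fin M, v (e i) ^ 2 = ∑ k : Fin N, v k ^ 2 := by
  rw [← Finset.sum_map Finset.univ e (fun k => v k ^ 2)]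
  apply Finset.sum_subset (Finset.subset_univ _)
  intro k _ hk
  have : ∀ i, e i ≠ k := by
    intro i hik
    exact hk (Finset.mem_map.mpr ⟨i, Finset.mem_univ i, hik⟩)
  rw [hv k this]
  ring

/-- restriction of coordinates -/
def restrictCoords (e : Fin M ↪ Fin N) (v : EuclideanSpace ℝ (Fin N)) :
    EuclideanSpace ℝ (Fin M) := WithLp.toLp 2 (fun i => v (e i))

theorem norm_restrict (e : Fin M ↪ Fin N) (v : EuclideanSpace ℝ (Fin N))
    (hv : ∀ k, (∀ i, e i ≠ k) → v k = 0) :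
    ‖restrictCoords e v‖ = ‖v‖ := by
  rw [EuclideanSpace.norm_eq, EuclideanSpace.norm_eq]
  congr 1
  simpa [restrictCoords, sq_abs] using sum_sq_restrict e v hv

/-- extension by zero -/
def extendZero (e : Fin M ↪ Fin N) (u : EuclideanSpace ℝ (Fin M)) :
    EuclideanSpace ℝ (Fin N) :=
  WithLp.toLp 2 (fun k => ∑ i : Fin M, if e i = k then u i else 0)

theorem extendZero_apply_mem (e : Fin M ↪ Fin N) (u : EuclideanSpace ℝ (Fin M)) (i : Fin M) :
    extendZero e u (e i) = u i := by
  simp only [extendZero, PiLp.toLp_apply]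
  rw [Finset.sum_eq_single i]
  · simp
  · intro j _ hj
    rw [if_neg (fun h => hj (e.injective h))]
  · simp

theorem extendZero_apply_not_mem (e : Fin M ↪ Fin N) (u : EuclideanSpace ℝ (Fin M)) (k : Fin N)
    (hk : ∀ i, e i ≠ k) : extendZero e u k = 0 := by
  simp only [extendZero, PiLp.toLp_apply]
  rw [Finset.sum_eq_zero]
  intro i _
  rw [if_neg (hk i)]

theorem continuous_extendZero (e : Fin M ↪ Fin N) : Continuous (extendZero e) := by
  refine (PiLp.continuous_toLp 2 _).comp ?_
  apply continuous_pi
  intro k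
  apply continuous_finset_sum
  intro i _
  by_cases h : e i = k
  · simpa [h] using PiLp.continuous_apply 2 _ i
  · simp [h]
    exact continuous_const

/-- The subsphere supported on an embedded coordinate set is homeomorphic to the
corresponding lower-dimensional sphere. -/
def sphereRestrict (e : Fin M ↪ Fin N) :
    ↥{v : EuclideanSpace ℝ (Fin N) | ‖v‖ = 1 ∧ ∀ k, (∀ i, e i ≠ k) → v k = 0} ≃ₜ
      ↥(sphere (0 : EuclideanSpace ℝ (Fin M)) 1) where
  toFun v := ⟨restrictCoords e v.1, by
    rw [mem_sphere_zero_iff_norm, norm_restrict e v.1 v.2.2]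
    exact v.2.1⟩
  invFun u := ⟨extendZero e u.1, by
    constructor
    · have h1 : ∀ k, (∀ i, e i ≠ k) → extendZero e u.1 k = 0 :=
        extendZero_apply_not_mem e u.1
      have h2 : restrictCoords e (extendZero e u.1) = u.1 := by
        ext i
        exact extendZero_apply_mem e u.1 i
      have := norm_restrict e (extendZero e u.1) h1
      rw [h2] at this
      rw [← this]
      exact mem_sphere_zero_iff_norm.mp u.2
    · exact extendZero_apply_not_mem e u.1⟩
  left_inv v := by
    apply Subtype.ext
    ext k
    show extendZero e (restrictCoords e v.1) k = v.1 k
    by_cases h : ∃ i, e i = k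
    · obtain ⟨i, rfl⟩ := h
      exact extendZero_apply_mem e _ i
    · push_neg at h
      rw [extendZero_apply_not_mem e _ k h, v.2.2 k h]
  right_inv u := by
    apply Subtype.ext
    ext i
    show restrictCoords e (extendZero e u.1) (i) = u.1 i
    exact extendZero_apply_mem e _ i
  continuous_toFun := by
    apply Continuous.subtype_mk
    show Continuous fun v : {v : EuclideanSpace ℝ (Fin N) | _} => restrictCoords e v.1
    refine (PiLp.continuous_toLp 2 _).comp ?_
    apply continuous_pi
    intro i
    exact (PiLp.continuous_apply 2 _ (e i)).comp continuous_subtype_val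
  continuous_invFun := by
    apply Continuous.subtype_mk
    exact (continuous_extendZero e).comp continuous_subtype_val

end Restrict




section OmegaSplit

open Metric

variable {m : ℕ} (p : ℕ)

/-- first block of coordinates -/
def xpart (v : EuclideanSpace ℝ (Fin m)) : EuclideanSpace ℝ (Fin m) :=
  WithLp.toLp 2 (fun k : Fin m => if (k : ℕ) < p + 1 then v k else 0)

/-- second block of coordinates -/
def ypart (v : EuclideanSpace ℝ (Fin m)) : EuclideanSpace ℝ (Fin m) :=
  WithLp.toLp 2 (fun k : Fin m => if (k : ℕ) < p + 1 then 0 else v k)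

theorem continuous_xpart : Continuous (xpart (m := m) p) := by
  refine (PiLp.continuous_toLp 2 _).comp ?_
  apply continuous_pi
  intro k
  by_cases h : (k : ℕ) < p + 1 <;> simp only [xpart, h, if_true, if_false]
  · exact PiLp.continuous_apply 2 _ k
  · exact continuous_const

theorem continuous_ypart : Continuous (ypart (m := m) p) := by
  refine (PiLp.continuous_toLp 2 _).comp ?_
  apply continuous_pi
  intro k
  by_cases h : (k : ℕ) < p + 1 <;> simp only [ypart, h, if_true, if_false]
  · exact continuous_const
  · exact PiLp.continuous_apply 2 _ k

theorem xpart_add_ypart (v : EuclideanSpace ℝ (Fin m)) : xpart p v + ypart p v = v := by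
  ext k
  show xpart p v k + ypart p v k = v k
  by_cases h : (k : ℕ) < p + 1 <;> simp [xpart, ypart, h, -Order.lt_add_one_iff]

theorem inner_xpart_ypart (v : EuclideanSpace ℝ (Fin m)) :
    inner ℝ (xpart p v) (ypart p v) = (0 : ℝ) := by
  rw [PiLp.inner_apply]
  apply Finset.sum_eq_zero
  intro k _
  by_cases h : (k : ℕ) < p + 1 <;> simp [xpart, ypart, h, -Order.lt_add_one_iff]

theorem norm_sq_xpart_add_ypart (v : EuclideanSpace ℝ (Fin m)) :
    ‖xpart p v‖ ^ 2 + ‖ypart p v‖ ^ 2 = ‖v‖ ^ 2 := by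
  conv_rhs => rw [← xpart_add_ypart p v]
  rw [norm_add_sq_real, inner_xpart_ypart]
  ring

theorem xpart_eq_zero_iff (v : EuclideanSpace ℝ (Fin m)) :
    xpart p v = 0 ↔ ∀ k : Fin m, (k : ℕ) < p + 1 → v k = 0 := by
  constructor
  · intro h k hk
    have := congrArg (fun w : EuclideanSpace ℝ (Fin m) => w k) h
    simpa [xpart, hk, -Order.lt_add_one_iff] using this
  · intro h
    ext k
    show (if (k : ℕ) < p + 1 then v k else 0) = 0
    by_cases hk : (k : ℕ) < p + 1 <;> simp [hk, h]

theorem ypart_eq_zero_iff (v : EuclideanSpace ℝ (Fin m)) :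
    ypart p v = 0 ↔ ∀ k : Fin m, p + 1 ≤ (k : ℕ) → v k = 0 := by
  constructor
  · intro h k hk
    have := congrArg (fun w : EuclideanSpace ℝ (Fin m) => w k) h
    simpa [ypart, Nat.not_lt.mpr hk, -Order.lt_add_one_iff] using this
  · intro h
    ext k
    show (if (k : ℕ) < p + 1 then 0 else v k) = 0
    by_cases hk : (k : ℕ) < p + 1 <;> simp [hk]
    exact h k (Nat.not_lt.mp hk)

variable {n : ℕ}

theorem mem_omega_iff {v : EuclideanSpace ℝ (Fin (n + 1))} :
    v ∈ Omega n p ↔ ‖v‖ = 1 ∧ xpart p v ≠ 0 ∧ ypart p v ≠ 0 := by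
  rw [Omega, Set.mem_diff]
  simp only [Set.mem_setOf_eq, Set.mem_union]
  constructor
  · rintro ⟨h1, h2⟩
    refine ⟨h1, ?_, ?_⟩
    · intro h0
      exact h2 (Or.inr ⟨h1, (xpart_eq_zero_iff p v).mp h0⟩)
    · intro h0
      exact h2 (Or.inl ⟨h1, (ypart_eq_zero_iff p v).mp h0⟩)
  · rintro ⟨h1, hx, hy⟩
    refine ⟨h1, ?_⟩
    rintro (⟨-, h⟩ | ⟨-, h⟩)
    · exact hy ((ypart_eq_zero_iff p v).mpr h)
    · exact hx ((xpart_eq_zero_iff p v).mpr h)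

theorem xpart_combo {u w : EuclideanSpace ℝ (Fin (n + 1))} (hu : u ∈ greatSphereP n p)
    (hw : w ∈ greatSphereQ n p) (s t : ℝ) : xpart p (s • u + t • w) = s • u := by
  ext k
  show (if (k : ℕ) < p + 1 then (s • u + t • w) k else 0) = s * u k
  by_cases hk : (k : ℕ) < p + 1
  · have hwk : w k = 0 := hw.2 k hk
    simp [hk, PiLp.add_apply, PiLp.smul_apply, hwk, smul_eq_mul]
  · have huk : u k = 0 := hu.2 k (Nat.not_lt.mp hk)
    simp [hk, huk]

theorem ypart_combo {u w : EuclideanSpace ℝ (Fin (n + 1))} (hu : u ∈ greatSphereP n p)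
    (hw : w ∈ greatSphereQ n p) (s t : ℝ) : ypart p (s • u + t • w) = t • w := by
  ext k
  show (if (k : ℕ) < p + 1 then 0 else (s • u + t • w) k) = t * w k
  by_cases hk : (k : ℕ) < p + 1
  · have hwk : w k = 0 := hw.2 k hk
    simp [hk, hwk]
  · have huk : u k = 0 := hu.2 k (Nat.not_lt.mp hk)
    simp [hk, PiLp.add_apply, PiLp.smul_apply, huk, smul_eq_mul]

end OmegaSplit


section OmegaHomeo

open Metric

variable {n : ℕ} (p : ℕ)

theorem norm_eq_one_of_sq {x : ℝ} (h : x ^ 2 = 1) (hx : 0 ≤ x) : x = 1 := by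
  nlinarith

theorem memP_of_omega {v : EuclideanSpace ℝ (Fin (n + 1))} (hv : v ∈ Omega n p) :
    ‖xpart p v‖⁻¹ • xpart p v ∈ greatSphereP n p := by
  obtain ⟨-, hx, -⟩ := (mem_omega_iff p).mp hv
  have hxn : ‖xpart p v‖ ≠ 0 := norm_ne_zero_iff.mpr hx
  constructor
  · rw [norm_smul, norm_inv, norm_norm, inv_mul_cancel₀ hxn]
  · intro k hk
    show ‖xpart p v‖⁻¹ * xpart p v k = 0
    have h0 : xpart p v k = 0 := by simp [xpart, Nat.not_lt.mpr hk, -Order.lt_add_one_iff]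
    rw [h0, mul_zero]

theorem memQ_of_omega {v : EuclideanSpace ℝ (Fin (n + 1))} (hv : v ∈ Omega n p) :
    ‖ypart p v‖⁻¹ • ypart p v ∈ greatSphereQ n p := by
  obtain ⟨-, -, hy⟩ := (mem_omega_iff p).mp hv
  have hyn : ‖ypart p v‖ ≠ 0 := norm_ne_zero_iff.mpr hy
  constructor
  · rw [norm_smul, norm_inv, norm_norm, inv_mul_cancel₀ hyn]
  · intro k hk
    show ‖ypart p v‖⁻¹ * ypart p v k = 0
    have h0 : ypart p v k = 0 := by simp [ypart, hk, -Order.lt_add_one_iff]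
    rw [h0, mul_zero]

theorem memI_of_omega {v : EuclideanSpace ℝ (Fin (n + 1))} (hv : v ∈ Omega n p) :
    ‖xpart p v‖ ∈ Set.Ioo (0:ℝ) 1 := by
  obtain ⟨h1, hx, hy⟩ := (mem_omega_iff p).mp hv
  have hxpos : 0 < ‖xpart p v‖ := norm_pos_iff.mpr hx
  have hypos : 0 < ‖ypart p v‖ := norm_pos_iff.mpr hy
  have hsq := norm_sq_xpart_add_ypart p v
  rw [h1] at hsq
  exact ⟨hxpos, by nlinarith⟩

theorem memOmega_of_combo {u w : EuclideanSpace ℝ (Fin (n + 1))} {t : ℝ}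
    (hu : u ∈ greatSphereP n p) (hw : w ∈ greatSphereQ n p) (ht : t ∈ Set.Ioo (0:ℝ) 1) :
    t • u + Real.sqrt (1 - t ^ 2) • w ∈ Omega n p := by
  obtain ⟨ht0, ht1⟩ := ht
  have hs : (0:ℝ) < 1 - t ^ 2 := by nlinarith
  have hsqrt : 0 < Real.sqrt (1 - t ^ 2) := Real.sqrt_pos.mpr hs
  have hu0 : u ≠ 0 := by
    intro h
    have h1 := hu.1
    rw [h, norm_zero] at h1
    exact zero_ne_one h1
  have hw0 : w ≠ 0 := by
    intro h
    have h1 := hw.1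
    rw [h, norm_zero] at h1
    exact zero_ne_one h1
  have hxp := xpart_combo p hu hw t (Real.sqrt (1 - t ^ 2))
  have hyp := ypart_combo p hu hw t (Real.sqrt (1 - t ^ 2))
  rw [mem_omega_iff p]
  refine ⟨?_, ?_, ?_⟩
  · have h2 := norm_sq_xpart_add_ypart p (t • u + Real.sqrt (1 - t ^ 2) • w)
    rw [hxp, hyp, norm_smul, norm_smul, hu.1, hw.1, Real.norm_eq_abs, Real.norm_eq_abs,
      abs_of_pos ht0, abs_of_pos hsqrt, mul_one, mul_one, Real.sq_sqrt hs.le] at h2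
    have h3 : ‖t • u + Real.sqrt (1 - t ^ 2) • w‖ ^ 2 = 1 := by rw [← h2]; ring
    exact norm_eq_one_of_sq h3 (norm_nonneg _)
  · rw [hxp]
    exact smul_ne_zero (ne_of_gt ht0) hu0
  · rw [hyp]
    exact smul_ne_zero (ne_of_gt hsqrt) hw0

/-- The product decomposition of `Ω`. -/
def omegaHomeo (n p : ℕ) :
    ↥(Omega n p) ≃ₜ ↥(greatSphereP n p) × ↥(greatSphereQ n p) × ↥(Set.Ioo (0:ℝ) 1) where
  toFun v := (⟨‖xpart p v.1‖⁻¹ • xpart p v.1, memP_of_omega p v.2⟩,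
    ⟨‖ypart p v.1‖⁻¹ • ypart p v.1, memQ_of_omega p v.2⟩,
    ⟨‖xpart p v.1‖, memI_of_omega p v.2⟩)
  invFun uwt := ⟨(uwt.2.2 : ℝ) • uwt.1.1 + Real.sqrt (1 - (uwt.2.2 : ℝ) ^ 2) • uwt.2.1.1,
    memOmega_of_combo p uwt.1.2 uwt.2.1.2 uwt.2.2.2⟩
  left_inv v := by
    apply Subtype.ext
    show ‖xpart p v.1‖ • (‖xpart p v.1‖⁻¹ • xpart p v.1) +
      Real.sqrt (1 - ‖xpart p v.1‖ ^ 2) • (‖ypart p v.1‖⁻¹ • ypart p v.1) = v.1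
    obtain ⟨h1, hx, hy⟩ := (mem_omega_iff p).mp v.2
    have hxn : ‖xpart p v.1‖ ≠ 0 := norm_ne_zero_iff.mpr hx
    have hyn : ‖ypart p v.1‖ ≠ 0 := norm_ne_zero_iff.mpr hy
    have hypos : 0 < ‖ypart p v.1‖ := norm_pos_iff.mpr hy
    have hsq := norm_sq_xpart_add_ypart p v.1
    rw [h1] at hsq
    have hb : Real.sqrt (1 - ‖xpart p v.1‖ ^ 2) = ‖ypart p v.1‖ := by
      rw [show (1:ℝ) - ‖xpart p v.1‖ ^ 2 = ‖ypart p v.1‖ ^ 2 by nlinarith]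
      exact Real.sqrt_sq hypos.le
    rw [hb, smul_smul, smul_smul, mul_inv_cancel₀ hxn, mul_inv_cancel₀ hyn, one_smul, one_smul]
    exact xpart_add_ypart p v.1
  right_inv uwt := by
    obtain ⟨u, w, t⟩ := uwt
    obtain ⟨ht0, ht1⟩ := t.2
    have hs : (0:ℝ) < 1 - (t:ℝ) ^ 2 := by nlinarith
    have hsqrt : 0 < Real.sqrt (1 - (t:ℝ) ^ 2) := Real.sqrt_pos.mpr hs
    have hxp := xpart_combo p u.2 w.2 (t:ℝ) (Real.sqrt (1 - (t:ℝ) ^ 2))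
    have hyp := ypart_combo p u.2 w.2 (t:ℝ) (Real.sqrt (1 - (t:ℝ) ^ 2))
    have hxnorm : ‖xpart p ((t:ℝ) • u.1 + Real.sqrt (1 - (t:ℝ) ^ 2) • w.1)‖ = (t:ℝ) := by
      rw [hxp, norm_smul, u.2.1, Real.norm_eq_abs, abs_of_pos ht0, mul_one]
    have hynorm : ‖ypart p ((t:ℝ) • u.1 + Real.sqrt (1 - (t:ℝ) ^ 2) • w.1)‖
        = Real.sqrt (1 - (t:ℝ) ^ 2) := by
      rw [hyp, norm_smul, w.2.1, Real.norm_eq_abs, abs_of_pos hsqrt, mul_one]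
    refine Prod.ext ?_ (Prod.ext ?_ ?_)
    · apply Subtype.ext
      show ‖xpart p _‖⁻¹ • xpart p _ = u.1
      rw [hxnorm, hxp, smul_smul, inv_mul_cancel₀ (ne_of_gt ht0), one_smul]
    · apply Subtype.ext
      show ‖ypart p _‖⁻¹ • ypart p _ = w.1
      rw [hynorm, hyp, smul_smul, inv_mul_cancel₀ (ne_of_gt hsqrt), one_smul]
    · exact Subtype.ext hxnorm
  continuous_toFun := by
    have hcx : Continuous fun v : ↥(Omega n p) => xpart p v.1 :=
      (continuous_xpart p).comp continuous_subtype_val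
    have hcy : Continuous fun v : ↥(Omega n p) => ypart p v.1 :=
      (continuous_ypart p).comp continuous_subtype_val
    have hnx : Continuous fun v : ↥(Omega n p) => ‖xpart p v.1‖ := hcx.norm
    have hny : Continuous fun v : ↥(Omega n p) => ‖ypart p v.1‖ := hcy.norm
    have hnxinv : Continuous fun v : ↥(Omega n p) => ‖xpart p v.1‖⁻¹ :=
      hnx.inv₀ fun v => norm_ne_zero_iff.mpr ((mem_omega_iff p).mp v.2).2.1
    have hnyinv : Continuous fun v : ↥(Omega n p) => ‖ypart p v.1‖⁻¹ :=
      hny.inv₀ fun v => norm_ne_zero_iff.mpr ((mem_omega_iff p).mp v.2).2.2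
    refine Continuous.prodMk ?_ (Continuous.prodMk ?_ ?_)
    · exact (hnxinv.smul hcx).subtype_mk _
    · exact (hnyinv.smul hcy).subtype_mk _
    · exact hnx.subtype_mk _
  continuous_invFun := by
    have hct : Continuous fun z : ↥(greatSphereP n p) × ↥(greatSphereQ n p) ×
        ↥(Set.Ioo (0:ℝ) 1) => (z.2.2 : ℝ) :=
      continuous_subtype_val.comp (continuous_snd.comp continuous_snd)
    have hcu : Continuous fun z : ↥(greatSphereP n p) × ↥(greatSphereQ n p) ×
        ↥(Set.Ioo (0:ℝ) 1) => (z.1 : EuclideanSpace ℝ (Fin (n+1))) :=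
      continuous_subtype_val.comp continuous_fst
    have hcw : Continuous fun z : ↥(greatSphereP n p) × ↥(greatSphereQ n p) ×
        ↥(Set.Ioo (0:ℝ) 1) => (z.2.1 : EuclideanSpace ℝ (Fin (n+1))) :=
      continuous_subtype_val.comp (continuous_fst.comp continuous_snd)
    have hsqc : Continuous fun z : ↥(greatSphereP n p) × ↥(greatSphereQ n p) ×
        ↥(Set.Ioo (0:ℝ) 1) => Real.sqrt (1 - (z.2.2 : ℝ) ^ 2) :=
      Real.continuous_sqrt.comp (continuous_const.sub (hct.pow 2))
    exact ((hct.smul hcu).add (hsqc.smul hcw)).subtype_mk _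

end OmegaHomeo


section Final

open Metric Module

theorem greatSphereP_eq (n p : ℕ) (h : p + 1 ≤ n + 1) :
    greatSphereP n p = {v : EuclideanSpace ℝ (Fin (n+1)) | ‖v‖ = 1 ∧
      ∀ k, (∀ i, (Fin.castLEEmb h) i ≠ k) → v k = 0} := by
  ext v
  simp only [greatSphereP, Set.mem_setOf_eq, and_congr_right_iff]
  intro _
  constructor
  · intro hv k hk
    apply hv
    by_contra hlt
    push_neg at hlt
    exact hk ⟨(k:ℕ), hlt⟩ (by apply Fin.ext; simp)
  · intro hv k hk
    apply hv
    intro i hik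
    have hival : (i : ℕ) = (k : ℕ) := by
      have := congrArg Fin.val hik
      simpa using this
    have := i.2
    omega

/-- embedding of the last `q+1` coordinates -/
def embQ (p q n : ℕ) (hn : n = p + q + 1) : Fin (q+1) ↪ Fin (n+1) where
  toFun i := ⟨p + 1 + (i : ℕ), by omega⟩
  inj' i j hij := by
    apply Fin.ext
    have := congrArg Fin.val hij
    simpa using this

theorem greatSphereQ_eq (n p q : ℕ) (hn : n = p + q + 1) :
    greatSphereQ n p = {v : EuclideanSpace ℝ (Fin (n+1)) | ‖v‖ = 1 ∧
      ∀ k, (∀ i, (embQ p q n hn) i ≠ k) → v k = 0} := by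
  ext v
  simp only [greatSphereQ, Set.mem_setOf_eq, and_congr_right_iff]
  intro _
  constructor
  · intro hv k hk
    apply hv
    by_contra hge
    push_neg at hge
    have hk2 := k.2
    refine hk ⟨(k : ℕ) - (p + 1), by omega⟩ ?_
    apply Fin.ext
    show p + 1 + ((k : ℕ) - (p + 1)) = (k : ℕ)
    omega
  · intro hv k hk
    apply hv
    intro i hik
    have := congrArg Fin.val hik
    simp only [embQ, Function.Embedding.coeFn_mk] at this
    change p + 1 + (i : ℕ) = (k : ℕ) at this
    omega

end Final

open Metric Module

/-- For `p, q ≥ 2` and `n = p + q + 1`, the complement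
`Ω = S^n ∖ (S^p ∪ S^q)` is simply connected. -/
theorem omega_simplyConnected (p q : ℕ) (hp : 2 ≤ p) (hq : 2 ≤ q)
    (n : ℕ) (hn : n = p + q + 1) :
    SimplyConnectedSpace ↥(Omega n p) := by
  have h1 : p + 1 ≤ n + 1 := by omega
  haveI i1 : SimplyConnectedSpace ↥(sphere (0 : EuclideanSpace ℝ (Fin (p+1))) 1) :=
    sphere_simplyConnected (by rw [finrank_euclideanSpace_fin]; omega)
  haveI i2 : SimplyConnectedSpace ↥(sphere (0 : EuclideanSpace ℝ (Fin (q+1))) 1) :=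
    sphere_simplyConnected (by rw [finrank_euclideanSpace_fin]; omega)
  haveI i3 : SimplyConnectedSpace ↥(greatSphereP n p) :=
    simplyConnected_of_homeomorph
      (((Homeomorph.setCongr (greatSphereP_eq n p h1)).trans
        (sphereRestrict (Fin.castLEEmb h1))).symm)
  haveI i4 : SimplyConnectedSpace ↥(greatSphereQ n p) :=
    simplyConnected_of_homeomorph
      (((Homeomorph.setCongr (greatSphereQ_eq n p q hn)).trans
        (sphereRestrict (embQ p q n hn))).symm)
  haveI i5 : ContractibleSpace ↥(Set.Ioo (0:ℝ) 1) :=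
    (convex_Ioo (0:ℝ) 1).contractibleSpace (Set.nonempty_Ioo.mpr one_pos)
  exact simplyConnected_of_homeomorph (omegaHomeo n p).symm
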